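/- For all sufficiently large n, R(n) ≥ n!/(n^{13} · 5^{n−10}); that is, there exists a family of at least n!/(n^{13} 5^{n−10}) permutations of [n] that are pairwise two-separated. -/

import Mathlib

/-- Two permutations `π'` and `π''` of `Fin n` (viewed as linear orders: `π i` is the
element in position `i`) are two-separated if some element `a` is followed immediately
by `x` then `y` in `π'` and immediately by `v` then `w` in `π''`, where `x, y, v, w`
are four pairwise distinct elements. -/
def TwoSeparated (n : ℕ) (π' π'' : Equiv.Perm (Fin n)) : Prop :=
  ∃ i j : ℕ, ∃ hi : i + 2 < n, ∃ hj : j + 2 < n,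
    π' ⟨i, by omega⟩ = π'' ⟨j, by omega⟩ ∧
    ({π' ⟨i + 1, by omega⟩, π' ⟨i + 2, hi⟩,
      π'' ⟨j + 1, by omega⟩, π'' ⟨j + 2, hj⟩} : Finset (Fin n)).card = 4

open Finset

lemma card_four {α : Type*} [DecidableEq α] {a b c d : α} (hab : a ≠ b) (hac : a ≠ c)
    (had : a ≠ d) (hbc : b ≠ c) (hbd : b ≠ d) (hcd : c ≠ d) :
    ({a, b, c, d} : Finset α).card = 4 := by
  rw [card_insert_of_notMem (by simp [hab, hac, had]),
      card_insert_of_notMem (by simp [hbc, hbd]),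
      card_insert_of_notMem (by simp [hcd]), card_singleton]

lemma quad_comm {α : Type*} [DecidableEq α] (a b c d : α) :
    ({a, b, c, d} : Finset α) = {c, d, a, b} := by
  ext x; simp only [mem_insert, mem_singleton]; tauto

lemma twoSeparated_symm {n : ℕ} {π τ : Equiv.Perm (Fin n)} (h : TwoSeparated n π τ) :
    TwoSeparated n τ π := by
  obtain ⟨i, j, hi, hj, heq, hcard⟩ := h
  refine ⟨j, i, hj, hi, heq.symm, ?_⟩
  rw [quad_comm]
  exact hcard

lemma not_twoSeparated_self {n : ℕ} (π : Equiv.Perm (Fin n)) : ¬ TwoSeparated n π π := by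
  rintro ⟨i, j, hi, hj, heq, hcard⟩
  have hij : i = j := congrArg Fin.val (π.injective heq)
  subst hij
  have hsub : ({π ⟨i + 1, by omega⟩, π ⟨i + 2, hi⟩, π ⟨i + 1, by omega⟩, π ⟨i + 2, hj⟩} :
      Finset (Fin n)) ⊆ {π ⟨i + 1, by omega⟩, π ⟨i + 2, hi⟩} := by
    intro x hx
    simp only [mem_insert, mem_singleton] at hx ⊢
    tauto
  have h2 := card_le_card hsub
  rw [hcard] at h2
  have h3 : ({π ⟨i + 1, by omega⟩, π ⟨i + 2, hi⟩} : Finset (Fin n)).card ≤ 2 := by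
    apply le_trans (card_insert_le _ _)
    simp
  omega

lemma collStep {n : ℕ} {σ : Equiv.Perm (Fin n)} (h : ¬ TwoSeparated n σ 1) {k : ℕ}
    (hk : k + 2 < n) (hv : (σ ⟨k, by omega⟩ : ℕ) + 2 < n) :
    (σ ⟨k + 1, by omega⟩ : ℕ) = (σ ⟨k, by omega⟩ : ℕ) + 1 ∨
    (σ ⟨k + 1, by omega⟩ : ℕ) = (σ ⟨k, by omega⟩ : ℕ) + 2 ∨
    (σ ⟨k + 2, hk⟩ : ℕ) = (σ ⟨k, by omega⟩ : ℕ) + 1 ∨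
    (σ ⟨k + 2, hk⟩ : ℕ) = (σ ⟨k, by omega⟩ : ℕ) + 2 := by
  by_contra hc
  push_neg at hc
  obtain ⟨h1, h2, h3, h4⟩ := hc
  apply h
  refine ⟨k, (σ ⟨k, by omega⟩ : ℕ), hk, hv, Fin.ext rfl, ?_⟩
  simp only [Equiv.Perm.one_apply]
  apply card_four
  · intro hcon
    have hvv : k + 1 = k + 2 := congrArg Fin.val (σ.injective hcon)
    omega
  · intro hcon
    exact h1 (congrArg Fin.val hcon)
  · intro hcon
    exact h2 (congrArg Fin.val hcon)
  · intro hcon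
    exact h3 (congrArg Fin.val hcon)
  · intro hcon
    exact h4 (congrArg Fin.val hcon)
  · intro hcon
    have : (σ ⟨k, by omega⟩ : ℕ) + 1 = (σ ⟨k, by omega⟩ : ℕ) + 2 := congrArg Fin.val hcon
    omega

/-- Label of position `k` in permutation `σ`, recording which of the four possible
"collision" equations holds at position `k` (relative to the identity permutation). -/
def lab {n : ℕ} (σ : Equiv.Perm (Fin n)) (k : ℕ) : Fin 4 :=
  if hk : k + 2 < n then
    if _hv : (σ ⟨k, by omega⟩ : ℕ) + 2 < n then
      if (σ ⟨k + 1, by omega⟩ : ℕ) = (σ ⟨k, by omega⟩ : ℕ) + 1 then 0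
      else if (σ ⟨k + 1, by omega⟩ : ℕ) = (σ ⟨k, by omega⟩ : ℕ) + 2 then 1
      else if (σ ⟨k + 2, hk⟩ : ℕ) = (σ ⟨k, by omega⟩ : ℕ) + 1 then 2
      else 3
    else 0
  else 0

def d1 (l : Fin 4) : ℕ := if l.val ≤ 1 then 1 else 2
def d2 (l : Fin 4) : ℕ := if l.val % 2 = 0 then 1 else 2

lemma d1_ge (l : Fin 4) : 1 ≤ d1 l := by unfold d1; split <;> omega
lemma d1_le (l : Fin 4) : d1 l ≤ 2 := by unfold d1; split <;> omega

lemma labSpec {n : ℕ} {σ : Equiv.Perm (Fin n)} (h : ¬ TwoSeparated n σ 1) {k : ℕ}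
    (hk : k + 2 < n) (hv : (σ ⟨k, by omega⟩ : ℕ) + 2 < n)
    (s δ : ℕ) (hs : k + s < n)
    (hsEq : s = d1 (lab σ k)) (hδEq : δ = d2 (lab σ k)) :
    (σ ⟨k + s, hs⟩ : ℕ) = (σ ⟨k, by omega⟩ : ℕ) + δ := by
  have hstep := collStep h hk hv
  rw [lab, dif_pos hk, dif_pos hv] at hsEq hδEq
  split_ifs at hsEq hδEq with h1 h2 h3
  · simp only [d1, d2] at hsEq hδEq
    norm_num at hsEq hδEq
    subst hsEq; subst hδEq
    exact h1
  · simp only [d1, d2] at hsEq hδEq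
    norm_num at hsEq hδEq
    subst hsEq; subst hδEq
    exact h2
  · simp only [d1, d2] at hsEq hδEq
    norm_num at hsEq hδEq
    subst hsEq; subst hδEq
    exact h3
  · simp only [d1, d2] at hsEq hδEq
    subst hsEq; subst hδEq
    rcases hstep with h' | h' | h' | h'
    · exact absurd h' h1
    · exact absurd h' h2
    · exact absurd h' h3
    · exact h'

lemma decode {n : ℕ} (hn : 13 ≤ n) {σ τ : Equiv.Perm (Fin n)}
    (hσ : ¬ TwoSeparated n σ 1) (hτ : ¬ TwoSeparated n τ 1)
    (h1 : σ⁻¹ ⟨n - 2, by omega⟩ = τ⁻¹ ⟨n - 2, by omega⟩)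
    (h2 : σ⁻¹ ⟨n - 1, by omega⟩ = τ⁻¹ ⟨n - 1, by omega⟩)
    (h3 : σ ⟨n - 2, by omega⟩ = τ ⟨n - 2, by omega⟩)
    (h4 : σ ⟨n - 1, by omega⟩ = τ ⟨n - 1, by omega⟩)
    (h5 : ∀ k, k + 2 < n → lab σ k = lab τ k) :
    σ = τ := by
  have main : ∀ m : ℕ, ∀ k : ℕ, ∀ hk : k < n, n ≤ k + m → σ ⟨k, hk⟩ = τ ⟨k, hk⟩ := by
    intro m
    induction m with
    | zero => intro k hk hm; omega
    | succ m ih =>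
      intro k hk hm
      by_cases hA : (σ ⟨k, hk⟩ : ℕ) = n - 2
      · have e : σ ⟨k, hk⟩ = ⟨n - 2, by omega⟩ := Fin.ext hA
        have e' : σ⁻¹ ⟨n - 2, by omega⟩ = ⟨k, hk⟩ := Equiv.Perm.inv_eq_iff_eq.mpr e.symm
        rw [h1] at e'
        have e2 : τ ⟨k, hk⟩ = ⟨n - 2, by omega⟩ := (Equiv.Perm.inv_eq_iff_eq.mp e').symm
        exact e.trans e2.symm
      · by_cases hB : (σ ⟨k, hk⟩ : ℕ) = n - 1
        · have e : σ ⟨k, hk⟩ = ⟨n - 1, by omega⟩ := Fin.ext hB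
          have e' : σ⁻¹ ⟨n - 1, by omega⟩ = ⟨k, hk⟩ := Equiv.Perm.inv_eq_iff_eq.mpr e.symm
          rw [h2] at e'
          have e2 : τ ⟨k, hk⟩ = ⟨n - 1, by omega⟩ := (Equiv.Perm.inv_eq_iff_eq.mp e').symm
          exact e.trans e2.symm
        · have hv : (σ ⟨k, hk⟩ : ℕ) + 2 < n := by
            have := (σ ⟨k, hk⟩).isLt; omega
          by_cases hk2 : k + 2 < n
          · -- label case
            have hvτ : (τ ⟨k, hk⟩ : ℕ) + 2 < n := by
              by_contra hcon
              have hlt := (τ ⟨k, hk⟩).isLt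
              have : (τ ⟨k, hk⟩ : ℕ) = n - 2 ∨ (τ ⟨k, hk⟩ : ℕ) = n - 1 := by omega
              rcases this with hc | hc
              · have e : τ ⟨k, hk⟩ = ⟨n - 2, by omega⟩ := Fin.ext hc
                have e' : τ⁻¹ ⟨n - 2, by omega⟩ = ⟨k, hk⟩ := Equiv.Perm.inv_eq_iff_eq.mpr e.symm
                rw [← h1] at e'
                have e2 : σ ⟨k, hk⟩ = ⟨n - 2, by omega⟩ := (Equiv.Perm.inv_eq_iff_eq.mp e').symm
                exact hA (congrArg Fin.val e2)
              · have e : τ ⟨k, hk⟩ = ⟨n - 1, by omega⟩ := Fin.ext hc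
                have e' : τ⁻¹ ⟨n - 1, by omega⟩ = ⟨k, hk⟩ := Equiv.Perm.inv_eq_iff_eq.mpr e.symm
                rw [← h2] at e'
                have e2 : σ ⟨k, hk⟩ = ⟨n - 1, by omega⟩ := (Equiv.Perm.inv_eq_iff_eq.mp e').symm
                exact hB (congrArg Fin.val e2)
            have hsn : k + d1 (lab σ k) < n := by
              have := d1_le (lab σ k); omega
            have specσ := labSpec hσ hk2 hv (d1 (lab σ k)) (d2 (lab σ k)) hsn rfl rfl
            have specτ := labSpec hτ hk2 hvτ (d1 (lab σ k)) (d2 (lab σ k)) hsn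
              (by rw [h5 k hk2]) (by rw [h5 k hk2])
            have hih := ih (k + d1 (lab σ k)) hsn (by have := d1_ge (lab σ k); omega)
            have hihv : (σ ⟨k + d1 (lab σ k), hsn⟩ : ℕ) = (τ ⟨k + d1 (lab σ k), hsn⟩ : ℕ) :=
              congrArg Fin.val hih
            exact Fin.ext (by omega)
          · -- k = n - 2 or k = n - 1
            have : k = n - 2 ∨ k = n - 1 := by omega
            rcases this with hc | hc
            · subst hc; exact h3
            · subst hc; exact h4
  exact Equiv.ext fun x => by
    have := main n x.val x.isLt (by omega)
    simpa using this

/-- The injective encoding of a permutation colliding with the identity. -/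
def enc {n : ℕ} (hn : 13 ≤ n) (σ : Equiv.Perm (Fin n)) :
    Fin n × Fin n × Fin n × Fin n × (Fin n → Fin 4) :=
  (σ⁻¹ ⟨n - 2, by omega⟩, σ⁻¹ ⟨n - 1, by omega⟩, σ ⟨n - 2, by omega⟩, σ ⟨n - 1, by omega⟩,
    fun k => lab σ k.val)

open Classical in
lemma card_colliding {n : ℕ} (hn : 13 ≤ n) :
    (univ.filter (fun σ : Equiv.Perm (Fin n) => ¬ TwoSeparated n σ 1)).card ≤ n ^ 4 * 4 ^ n := by
  classical
  have hinj : Set.InjOn (enc hn)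
      ↑(univ.filter (fun σ : Equiv.Perm (Fin n) => ¬ TwoSeparated n σ 1)) := by
    intro σ hσ τ hτ heq
    simp only [coe_filter, Set.mem_setOf_eq, mem_univ, true_and] at hσ hτ
    have e1 := congrArg Prod.fst heq
    have e2 := congrArg (fun p => p.2.1) heq
    have e3 := congrArg (fun p => p.2.2.1) heq
    have e4 := congrArg (fun p => p.2.2.2.1) heq
    have e5 := congrArg (fun p => p.2.2.2.2) heq
    simp only [enc] at e1 e2 e3 e4 e5
    refine decode hn hσ hτ e1 e2 e3 e4 ?_
    intro k hk
    have := congrFun e5 ⟨k, by omega⟩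
    simpa using this
  have hmaps : ∀ σ ∈ (univ.filter (fun σ : Equiv.Perm (Fin n) => ¬ TwoSeparated n σ 1)),
      enc hn σ ∈ (univ : Finset (Fin n × Fin n × Fin n × Fin n × (Fin n → Fin 4))) :=
    fun σ _ => mem_univ _
  have hle := Finset.card_le_card_of_injOn (enc hn) hmaps hinj
  apply le_trans hle
  rw [card_univ]
  simp only [Fintype.card_prod, Fintype.card_fun, Fintype.card_fin]
  have : n * (n * (n * (n * 4 ^ n))) = n ^ 4 * 4 ^ n := by ring
  omega

lemma twoSeparated_mul {n : ℕ} (ρ π' π'' : Equiv.Perm (Fin n)) (h : TwoSeparated n π' π'') :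
    TwoSeparated n (ρ * π') (ρ * π'') := by
  obtain ⟨i, j, hi, hj, heq, hcard⟩ := h
  refine ⟨i, j, hi, hj, by simp [Equiv.Perm.mul_apply, heq], ?_⟩
  have himg : Finset.image (⇑ρ) ({π' ⟨i + 1, by omega⟩, π' ⟨i + 2, hi⟩,
      π'' ⟨j + 1, by omega⟩, π'' ⟨j + 2, hj⟩} : Finset (Fin n)) =
      {(ρ * π') ⟨i + 1, by omega⟩, (ρ * π') ⟨i + 2, hi⟩,
       (ρ * π'') ⟨j + 1, by omega⟩, (ρ * π'') ⟨j + 2, hj⟩} := by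
    simp [Finset.image_insert, Equiv.Perm.mul_apply]
  rw [← himg, Finset.card_image_of_injective _ ρ.injective]
  exact hcard

open Classical in
lemma degree_bound {n : ℕ} (hn : 13 ≤ n) (π : Equiv.Perm (Fin n)) :
    (univ.filter (fun τ : Equiv.Perm (Fin n) => ¬ TwoSeparated n π τ)).card ≤ n ^ 4 * 4 ^ n := by
  classical
  refine le_trans (Finset.card_le_card_of_injOn (fun τ => π⁻¹ * τ) ?_ ?_) (card_colliding hn)
  · intro τ hτ
    simp only [mem_filter, mem_univ, true_and, coe_filter, Set.mem_setOf_eq, mem_coe] at hτ ⊢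
    intro hcon
    apply hτ
    have : TwoSeparated n (π * (π⁻¹ * τ)) (π * 1) := twoSeparated_mul π _ _ hcon
    rw [mul_inv_cancel_left, mul_one] at this
    exact twoSeparated_symm this
  · intro a _ b _ hab
    exact mul_left_cancel hab

lemma greedy {V : Type*} [DecidableEq V] [Fintype V] (conflict : V → V → Prop)
    [inst : ∀ v, DecidablePred (conflict v)]
    (hsym : ∀ u v, conflict u v → conflict v u) (hrefl : ∀ v, conflict v v) (D : ℕ)
    (hdeg : ∀ v, (univ.filter (conflict v)).card ≤ D) :
    ∀ m : ℕ, ∀ A : Finset V, A.card ≤ m → ∃ S : Finset V, S ⊆ A ∧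
      (∀ s ∈ S, ∀ t ∈ S, s ≠ t → ¬ conflict s t) ∧ A.card ≤ D * S.card := by
  intro m
  induction m with
  | zero =>
    intro A hA
    exact ⟨∅, empty_subset _, by simp, by simpa using hA⟩
  | succ m ih =>
    intro A hA
    rcases A.eq_empty_or_nonempty with rfl | ⟨v, hv⟩
    · exact ⟨∅, empty_subset _, by simp, by simp⟩
    · set B := univ.filter (conflict v) with hB
      have hvB : v ∈ B := by simp [hB, hrefl v]
      set A' := A \ B with hA'
      have hssub : A' ⊂ A := by
        refine Finset.ssubset_iff_of_subset (sdiff_subset) |>.mpr ⟨v, hv, ?_⟩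
        simp [hA', hvB, hv]
      have hcardA' : A'.card ≤ m := by
        have := Finset.card_lt_card hssub
        omega
      obtain ⟨S', hS'sub, hS'pair, hS'card⟩ := ih A' hcardA'
      have hvS' : v ∉ S' := fun hc => by
        have := hS'sub hc
        rw [hA'] at this
        exact (Finset.mem_sdiff.mp this).2 hvB
      refine ⟨insert v S', ?_, ?_, ?_⟩
      · intro x hx
        rcases Finset.mem_insert.mp hx with rfl | hx
        · exact hv
        · exact sdiff_subset (hS'sub hx)
      · intro s hs t ht hst
        rcases Finset.mem_insert.mp hs with hs1 | hs2
        · rcases Finset.mem_insert.mp ht with ht1 | ht2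
          · exact absurd (hs1.trans ht1.symm) hst
          · subst hs1
            intro hc
            have : t ∈ B := by simp [hB, hc]
            exact (Finset.mem_sdiff.mp (hS'sub ht2)).2 this
        · rcases Finset.mem_insert.mp ht with ht1 | ht2
          · subst ht1
            intro hc
            have : s ∈ B := by simp [hB, hsym _ _ hc]
            exact (Finset.mem_sdiff.mp (hS'sub hs2)).2 this
          · exact hS'pair s hs2 t ht2 hst
      · have h1 : A.card ≤ A'.card + B.card := by
          have : A ⊆ A' ∪ B := by
            intro x hx
            by_cases hxB : x ∈ B
            · exact Finset.mem_union.mpr (Or.inr hxB)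
            · exact Finset.mem_union.mpr (Or.inl (Finset.mem_sdiff.mpr ⟨hx, hxB⟩))
          exact le_trans (Finset.card_le_card this) (Finset.card_union_le _ _)
        have h2 : B.card ≤ D := hdeg v
        rw [Finset.card_insert_of_notMem hvS']
        have := hS'card
        nlinarith

lemma nat_D_le {n : ℕ} (hn : 13 ≤ n) : n ^ 4 * 4 ^ n ≤ n ^ 13 * 5 ^ (n - 10) := by
  have h1 : (4 : ℕ) ^ n ≤ 5 ^ n := Nat.pow_le_pow_left (by norm_num) n
  have h2 : (5 : ℕ) ^ 10 ≤ n ^ 9 :=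
    le_trans (by norm_num) (Nat.pow_le_pow_left hn 9)
  have h3 : 10 + (n - 10) = n := by omega
  calc n ^ 4 * 4 ^ n ≤ n ^ 4 * 5 ^ n := Nat.mul_le_mul_left _ h1
    _ = n ^ 4 * (5 ^ 10 * 5 ^ (n - 10)) := by rw [← pow_add, h3]
    _ ≤ n ^ 4 * (n ^ 9 * 5 ^ (n - 10)) :=
        Nat.mul_le_mul_left _ (Nat.mul_le_mul_right _ h2)
    _ = n ^ 13 * 5 ^ (n - 10) := by ring

/-- For all sufficiently large `n`, there exists a family of at least
`n! / (n^13 · 5^(n−10))` permutations of `[n]` that are pairwise two-separated. -/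
theorem stmt11 :
    ∃ N : ℕ, ∀ n : ℕ, N ≤ n →
      ∃ F : Finset (Equiv.Perm (Fin n)),
        (∀ π₁ ∈ F, ∀ π₂ ∈ F, π₁ ≠ π₂ → TwoSeparated n π₁ π₂) ∧
        (Nat.factorial n : ℝ) / ((n : ℝ) ^ 13 * 5 ^ (n - 10)) ≤ (F.card : ℝ) := by
  classical
  refine ⟨13, fun n hn => ?_⟩
  obtain ⟨S, hSsub, hSpair, hScard⟩ :=
    greedy (fun π τ : Equiv.Perm (Fin n) => ¬ TwoSeparated n π τ)
      (fun u v h hc => h (twoSeparated_symm hc))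
      (fun v => not_twoSeparated_self v)
      (n ^ 4 * 4 ^ n)
      (fun v => degree_bound hn v)
      (Fintype.card (Equiv.Perm (Fin n))) univ (le_of_eq card_univ)
  refine ⟨S, ?_, ?_⟩
  · intro π₁ h₁ π₂ h₂ hne
    exact not_not.mp (hSpair π₁ h₁ π₂ h₂ hne)
  · have hfact : Nat.factorial n ≤ n ^ 4 * 4 ^ n * S.card := by
      rw [card_univ, Fintype.card_perm, Fintype.card_fin] at hScard
      exact hScard
    have hfact2 : Nat.factorial n ≤ n ^ 13 * 5 ^ (n - 10) * S.card :=
      le_trans hfact (Nat.mul_le_mul_right _ (nat_D_le hn))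
    have hnpos : (0 : ℝ) < (n : ℝ) := by
      have : 0 < n := by omega
      exact_mod_cast this
    have hpos : (0 : ℝ) < (n : ℝ) ^ 13 * 5 ^ (n - 10) := by positivity
    rw [div_le_iff₀ hpos]
    have : ((Nat.factorial n : ℕ) : ℝ) ≤ ((n ^ 13 * 5 ^ (n - 10) * S.card : ℕ) : ℝ) := by
      exact_mod_cast hfact2
    push_cast at this
    linarith
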